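/- Let a² > 2 and φ_max = arccos((-1 - √(1 + 2a⁴))/(2a²)). Then Φ(φ_max) > 0 and Φ(2π - φ_max) < 0, where Φ(φ) = -sin φ - (a²/4) sin 2φ. -/

import Mathlib

open Real

theorem Phi_sign_at_critical (a : ℝ) (ha : 2 < a^2)
    (Φ : ℝ → ℝ) (hΦ : ∀ φ, Φ φ = -Real.sin φ - (a^2/4) * Real.sin (2*φ))
    (φmax : ℝ) (hmax : φmax = Real.arccos ((-1 - Real.sqrt (1 + 2*a^4)) / (2*a^2))) :
    0 < Φ φmax ∧ Φ (2*π - φmax) < 0 := by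
  have ha0 : 0 < a^2 := by linarith
  set s := Real.sqrt (1 + 2*a^4) with hs
  have hs3 : 3 < s := by
    rw [hs, show (3:ℝ) = Real.sqrt 9 from
      by rw [show (9:ℝ) = 3^2 by norm_num, Real.sqrt_sq (by norm_num : (0:ℝ) ≤ 3)]]
    exact Real.sqrt_lt_sqrt (by norm_num) (by nlinarith)
  set L := (-1 - s) / (2*a^2) with hL
  have hLneg : L < 0 := div_neg_of_neg_of_pos (by linarith) (by linarith)
  have hs_lt : s < 2*a^2 - 1 := by
    rw [hs, show (2*a^2 - 1) = Real.sqrt ((2*a^2-1)^2) from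
      (Real.sqrt_sq (by nlinarith)).symm]
    exact Real.sqrt_lt_sqrt (by nlinarith) (by nlinarith)
  have hLgt : -1 < L := by
    rw [hL, lt_div_iff₀ (by linarith : (0:ℝ) < 2*a^2)]
    linarith
  have hcos : Real.cos φmax = L := by
    rw [hmax]; exact Real.cos_arccos (by linarith) (by linarith)
  have hsin : 0 < Real.sin φmax := by
    rw [hmax, Real.sin_arccos]
    apply Real.sqrt_pos.mpr
    nlinarith
  have hfac : 1 + (a^2/2) * L < 0 := by
    have h : (a^2/2) * L = (-1 - s)/4 := by
      have ha1 : a ≠ 0 := by rintro rfl; norm_num at ha0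
      rw [hL]; field_simp; ring
    rw [h]; linarith
  have key : 0 < Φ φmax := by
    rw [hΦ, Real.sin_two_mul, hcos]
    nlinarith [hsin, hfac]
  refine ⟨key, ?_⟩
  have h1 : Real.sin (2*π - φmax) = -Real.sin φmax := by
    rw [Real.sin_sub]; simp
  have h2 : Real.sin (2*(2*π - φmax)) = -Real.sin (2*φmax) := by
    rw [show 2*(2*π - φmax) = (2*π - 2*φmax) + 2*π by ring, Real.sin_add_two_pi,
      Real.sin_sub]
    simp
  rw [hΦ] at key ⊢
  rw [h1, h2]
  linarith
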